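/- Let p be an odd prime and k = 𝔽_p = ZMod p. Let 𝔰𝔩₂(k) be the Lie algebra of trace-zero 2×2 matrices over k, with standard basis e = E₁₂, f = E₂₁, h = E₁₁ − E₂₂, and let U = U(𝔰𝔩₂(k)) with canonical embedding ι. Set E = ι(e), F = ι(f), H = ι(h). Then the four elements Eᵖ, Fᵖ, Hᵖ − H, and Δ = 4·F·E + H² + 2·H all lie in the center of U. -/

import Mathlib

open LieAlgebra.SpecialLinear

section AuxGeneral

lemma uea_mem_center' {R L : Type*} [CommRing R] [LieRing L] [LieAlgebra R L]
    (z : UniversalEnvelopingAlgebra R L)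
    (h : ∀ x : L, Commute (UniversalEnvelopingAlgebra.ι R x) z) :
    z ∈ Subalgebra.center R (UniversalEnvelopingAlgebra R L) := by
  rw [Subalgebra.mem_center_iff]
  intro u
  obtain ⟨t, rfl⟩ : ∃ t, UniversalEnvelopingAlgebra.mkAlgHom R L t = u :=
    (UniversalEnvelopingAlgebra.ringCon R L).mkₐ_surjective (α := R) u
  induction t using TensorAlgebra.induction with
  | algebraMap r => rw [AlgHom.commutes]; exact Algebra.commutes r z
  | ι x => exact h x
  | mul a b ha hb => rw [map_mul, mul_assoc, hb, ← mul_assoc, ha, mul_assoc]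
  | add a b ha hb => rw [map_add, add_mul, mul_add, ha, hb]

variable {A : Type*} [Ring A] {a b c : A}

lemma pow_rel_c' (h2 : c * a = a * c + 2 * a) :
    ∀ n : ℕ, c * a ^ n = a ^ n * c + ((2 * n : ℕ) : A) * a ^ n := by
  intro n
  induction n with
  | zero => simp
  | succ n ih =>
      have key : c * a ^ (n+1) = (c * a ^ n) * a := by rw [mul_assoc, ← pow_succ]
      rw [key, ih]
      push_cast
      rw [pow_succ, add_mul, mul_assoc, h2]
      noncomm_ring

lemma pow_rel_b' (h1 : a * b = b * a + c) (h2 : c * a = a * c + 2 * a) :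
    ∀ n : ℕ, b * a ^ (n + 1) =
      a ^ (n + 1) * b - (((n + 1 : ℕ)) : A) * (a ^ n * c) - ((n * (n + 1) : ℕ) : A) * a ^ n := by
  have hba : b * a = a * b - c := by rw [h1]; noncomm_ring
  intro n
  induction n with
  | zero => simpa using hba
  | succ n ih =>
      have key : b * a ^ (n+2) = (b * a ^ (n+1)) * a := by rw [mul_assoc, ← pow_succ]
      rw [key, ih]
      push_cast
      rw [sub_mul, sub_mul, mul_assoc (a ^ (n+1)) b a, hba, mul_assoc, mul_assoc (a^n) c a, h2,
        pow_succ a (n+1), pow_succ a n]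
      noncomm_ring

lemma pow_c_mul_a' (h2 : c * a = a * c + 2 * a) :
    ∀ n : ℕ, c ^ n * a = a * (c + 2) ^ n := by
  intro n
  induction n with
  | zero => simp
  | succ n ih =>
      rw [pow_succ', mul_assoc, ih, ← mul_assoc, h2, pow_succ']
      noncomm_ring

lemma casimir_comm' (h1 : a * b = b * a + c) (h2 : c * a = a * c + 2 * a)
    (h3 : c * b = b * c - 2 * b) :
    Commute a (4*b*a + c^2 + 2*c) ∧ Commute b (4*b*a + c^2 + 2*c) ∧
      Commute c (4*b*a + c^2 + 2*c) := by
  have r1 : ∀ x : A, a * (b * x) = b * (a * x) + c * x := by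
    intro x; rw [← mul_assoc, h1]; noncomm_ring
  have r2 : ∀ x : A, c * (a * x) = a * (c * x) + 2 * (a * x) := by
    intro x; rw [← mul_assoc, h2]; noncomm_ring
  have r3 : ∀ x : A, c * (b * x) = b * (c * x) - 2 * (b * x) := by
    intro x; rw [← mul_assoc, h3]; noncomm_ring
  refine ⟨?_, ?_, ?_⟩ <;> unfold Commute SemiconjBy <;>
    (repeat' first
      | (exact rfl)
      | (simp only [mul_add, add_mul, mul_assoc, r1, r2, r3, h1, h2, h3]; noncomm_ring))

end AuxGeneral

/-- `e = E₁₂` in `𝔰𝔩₂(ZMod p)`. -/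
noncomputable def sl2e (p : ℕ) : sl (Fin 2) (ZMod p) := LieAlgebra.SpecialLinear.single (R := ZMod p) 0 1 (by decide) 1

/-- `f = E₂₁` in `𝔰𝔩₂(ZMod p)`. -/
noncomputable def sl2f (p : ℕ) : sl (Fin 2) (ZMod p) := LieAlgebra.SpecialLinear.single (R := ZMod p) 1 0 (by decide) 1

/-- `h = E₁₁ − E₂₂` in `𝔰𝔩₂(ZMod p)`. -/
noncomputable def sl2h (p : ℕ) : sl (Fin 2) (ZMod p) :=
  ⟨Matrix.single 0 0 (1 : ZMod p) - Matrix.single 1 1 (1 : ZMod p),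
    show _ ∈ LinearMap.ker (Matrix.traceLinearMap (Fin 2) (ZMod p) (ZMod p)) by
      rw [LinearMap.mem_ker]
      simp [Matrix.trace_sub, Matrix.trace_single_eq_same]⟩

section sl2aux
variable (p : ℕ)

lemma sl2_bracket_ef : ⁅sl2e p, sl2f p⁆ = sl2h p := by
  apply Subtype.ext
  rw [sl_bracket]
  show (sl2e p).val * (sl2f p).val - (sl2f p).val * (sl2e p).val = (sl2h p).val
  ext i j
  fin_cases i <;> fin_cases j <;>
    simp [sl2e, sl2f, sl2h, Matrix.mul_apply, Matrix.single, Fin.sum_univ_two]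

lemma sl2_bracket_he : ⁅sl2h p, sl2e p⁆ = sl2e p + sl2e p := by
  apply Subtype.ext
  rw [sl_bracket]
  show (sl2h p).val * (sl2e p).val - (sl2e p).val * (sl2h p).val = (sl2e p + sl2e p).val
  ext i j
  fin_cases i <;> fin_cases j <;>
    simp [sl2e, sl2f, sl2h, Matrix.mul_apply, Matrix.single, Fin.sum_univ_two]

lemma sl2_bracket_hf : ⁅sl2h p, sl2f p⁆ = -(sl2f p + sl2f p) := by
  apply Subtype.ext
  rw [sl_bracket]
  show (sl2h p).val * (sl2f p).val - (sl2f p).val * (sl2h p).val = (-(sl2f p + sl2f p)).val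
  ext i j
  fin_cases i <;> fin_cases j <;>
    (simp [sl2e, sl2f, sl2h, Matrix.mul_apply, Matrix.single, Fin.sum_univ_two]
     <;> ring)

lemma sl2_decomp (x : sl (Fin 2) (ZMod p)) :
    x = x.val 0 1 • sl2e p + x.val 1 0 • sl2f p + x.val 0 0 • sl2h p := by
  have htr : x.val 0 0 + x.val 1 1 = 0 := by
    have h2 : Matrix.trace x.val = 0 := x.property
    simpa [Matrix.trace, Matrix.diag, Fin.sum_univ_two] using h2
  apply Subtype.ext
  show x.val = _
  ext i j
  fin_cases i <;> fin_cases j <;>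
    simp [sl2e, sl2f, sl2h, Matrix.single] <;>
    linear_combination (htr)

end sl2aux

attribute [local instance] LieRing.ofAssociativeRing LieAlgebra.ofAssociativeAlgebra

set_option maxHeartbeats 1000000 in
theorem sl2_central_aux (p : ℕ) (hp : p.Prime) (hodd : Odd p) :
    (UniversalEnvelopingAlgebra.ι (ZMod p) (sl2e p)) ^ p ∈
      Subalgebra.center (ZMod p) (UniversalEnvelopingAlgebra (ZMod p) (sl (Fin 2) (ZMod p))) ∧
    (UniversalEnvelopingAlgebra.ι (ZMod p) (sl2f p)) ^ p ∈
      Subalgebra.center (ZMod p) (UniversalEnvelopingAlgebra (ZMod p) (sl (Fin 2) (ZMod p))) ∧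
    (UniversalEnvelopingAlgebra.ι (ZMod p) (sl2h p)) ^ p -
        (UniversalEnvelopingAlgebra.ι (ZMod p) (sl2h p)) ∈
      Subalgebra.center (ZMod p) (UniversalEnvelopingAlgebra (ZMod p) (sl (Fin 2) (ZMod p))) ∧
    4 * (UniversalEnvelopingAlgebra.ι (ZMod p) (sl2f p)) *
          (UniversalEnvelopingAlgebra.ι (ZMod p) (sl2e p)) +
        (UniversalEnvelopingAlgebra.ι (ZMod p) (sl2h p)) ^ 2 +
        2 * (UniversalEnvelopingAlgebra.ι (ZMod p) (sl2h p)) ∈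
      Subalgebra.center (ZMod p) (UniversalEnvelopingAlgebra (ZMod p) (sl (Fin 2) (ZMod p))) := by
  haveI : Fact p.Prime := ⟨hp⟩
  set U := UniversalEnvelopingAlgebra (ZMod p) (sl (Fin 2) (ZMod p)) with hU
  set ι' := UniversalEnvelopingAlgebra.ι (ZMod p) (L := sl (Fin 2) (ZMod p)) with hι
  set E : U := ι' (sl2e p) with hE
  set F : U := ι' (sl2f p) with hF
  set H : U := ι' (sl2h p) with hH
  -- basic relations
  have lEF : E * F - F * E = H := by
    have h := ι'.map_lie (sl2e p) (sl2f p)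
    rw [sl2_bracket_ef, Ring.lie_def] at h
    exact h.symm
  have lHE : H * E - E * H = E + E := by
    have h := ι'.map_lie (sl2h p) (sl2e p)
    rw [sl2_bracket_he, Ring.lie_def, map_add] at h
    exact h.symm
  have lHF : H * F - F * H = -(F + F) := by
    have h := ι'.map_lie (sl2h p) (sl2f p)
    rw [sl2_bracket_hf, Ring.lie_def, map_neg, map_add] at h
    exact h.symm
  have h1 : E * F = F * E + H := by rw [← lEF]; noncomm_ring
  have h2 : H * E = E * H + 2 * E := by
    have := lHE; rw [sub_eq_iff_eq_add] at this; rw [this]; noncomm_ring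
  have h3 : H * F = F * H - 2 * F := by
    have := lHF; rw [sub_eq_iff_eq_add] at this; rw [this]; noncomm_ring
  -- characteristic p
  have hp0 : ((p : ℕ) : U) = 0 := by
    rw [← map_natCast (algebraMap (ZMod p) U) p, ZMod.natCast_self, map_zero]
  have h2pow : (2 : U) ^ p = 2 := by
    rw [← map_ofNat (algebraMap (ZMod p) U) 2, ← map_pow, ZMod.pow_card]
  -- membership criterion
  have key : ∀ z : U, Commute E z → Commute F z → Commute H z →
      z ∈ Subalgebra.center (ZMod p) U := by
    intro z cE cF cH
    apply uea_mem_center'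
    intro x
    rw [sl2_decomp p x, map_add, map_add, map_smul, map_smul, map_smul]
    exact ((cE.smul_left _).add_left (cF.smul_left _)).add_left (cH.smul_left _)
  obtain ⟨m, hm⟩ : ∃ m, p = m + 1 := ⟨p - 1, (Nat.succ_pred_eq_of_pos hp.pos).symm⟩
  -- E^p central
  have memE : E ^ p ∈ Subalgebra.center (ZMod p) U := by
    apply key
    · exact (Commute.refl E).pow_right p
    · show F * E ^ p = E ^ p * F
      have t := pow_rel_b' h1 h2 m
      rw [← hm, hp0, Nat.cast_mul, hp0, mul_zero, zero_mul, zero_mul, sub_zero, sub_zero] at t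
      exact t
    · show H * E ^ p = E ^ p * H
      rw [pow_rel_c' h2 p, Nat.cast_mul, hp0, mul_zero, zero_mul, add_zero]
  -- F^p central
  have h1' : F * E = E * F + -H := by rw [h1]; abel
  have h2' : -H * F = F * -H + 2 * F := by rw [neg_mul, h3, mul_neg]; abel
  have memF : F ^ p ∈ Subalgebra.center (ZMod p) U := by
    apply key
    · show E * F ^ p = F ^ p * E
      have t := pow_rel_b' h1' h2' m
      rw [← hm, hp0, Nat.cast_mul, hp0, mul_zero, zero_mul, zero_mul, sub_zero, sub_zero] at t
      exact t
    · exact (Commute.refl F).pow_right p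
    · show H * F ^ p = F ^ p * H
      have t := pow_rel_c' h2' p
      rw [Nat.cast_mul, hp0, mul_zero, zero_mul, add_zero, neg_mul, mul_neg] at t
      exact neg_injective t
  -- H^p - H central
  have memH : H ^ p - H ∈ Subalgebra.center (ZMod p) U := by
    obtain ⟨r, hr⟩ := (Commute.ofNat_right H 2).exists_add_pow_prime_eq hp
    rw [h2pow, hp0] at hr; simp only [zero_mul, add_zero] at hr
    apply key
    · show E * (H ^ p - H) = (H ^ p - H) * E
      symm
      rw [sub_mul, pow_c_mul_a' h2 p, hr, h2]
      rw [mul_add, mul_sub, mul_two, two_mul]; abel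
    · show F * (H ^ p - H) = (H ^ p - H) * F
      obtain ⟨s, hs⟩ := (Commute.ofNat_right (-H) 2).exists_add_pow_prime_eq hp
      rw [h2pow, hp0] at hs; simp only [zero_mul, add_zero] at hs; rw [hodd.neg_pow] at hs
      have hHpF : H ^ p * F = F * (H ^ p - 2) := by
        have t := pow_c_mul_a' h2' p
        rw [hodd.neg_pow, hs] at t
        have t2 : -(H ^ p * F) = -(F * (H ^ p - 2)) :=
          calc -(H ^ p * F) = -(H ^ p) * F := (neg_mul _ _).symm
            _ = F * (-(H ^ p) + 2) := t
            _ = -(F * (H ^ p - 2)) := by rw [mul_add, mul_sub, mul_neg, neg_sub]; abel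
        exact neg_injective t2
      symm
      rw [sub_mul, hHpF, h3]
      rw [mul_sub, mul_sub, mul_two, two_mul]; abel
    · exact ((Commute.refl H).pow_right p).sub_right (Commute.refl H)
  -- Casimir central
  have memC : 4 * F * E + H ^ 2 + 2 * H ∈ Subalgebra.center (ZMod p) U := by
    obtain ⟨cE, cF, cH⟩ := casimir_comm' h1 h2 h3
    exact key _ cE cF cH
  exact ⟨memE, memF, memH, memC⟩


/-- In `U(𝔰𝔩₂(𝔽_p))` for an odd prime `p`, the elements `Eᵖ`, `Fᵖ`,
`Hᵖ − H` and `Δ = 4FE + H² + 2H` are central. -/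
theorem sl2_central_elements (p : ℕ) (hp : p.Prime) (hodd : Odd p) :
    letI U := UniversalEnvelopingAlgebra (ZMod p) (sl (Fin 2) (ZMod p))
    letI ι := UniversalEnvelopingAlgebra.ι (ZMod p) (L := sl (Fin 2) (ZMod p))
    letI E : U := ι (sl2e p)
    letI F : U := ι (sl2f p)
    letI H : U := ι (sl2h p)
    E ^ p ∈ Subalgebra.center (ZMod p) U ∧
    F ^ p ∈ Subalgebra.center (ZMod p) U ∧
    H ^ p - H ∈ Subalgebra.center (ZMod p) U ∧
    4 * F * E + H ^ 2 + 2 * H ∈ Subalgebra.center (ZMod p) U :=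
  sl2_central_aux p hp hodd
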